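/- Let σ₁, σ₂, σ₃ be reals, not all zero, with σ₁ + σ₂ + σ₃ = 0, and set σ₀ = √(−(σ₁σ₂ + σ₂σ₃ + σ₃σ₁)/3) (the radicand is positive). Assume σᵢ + σ₀ ≠ 0 and σᵢ − σ₀ ≠ 0 for i = 1,2,3. Let u₊ (respectively u₋) be the positive scalar multiple of (1/(σ₁±σ₀), 1/(σ₂±σ₀), 1/(σ₃±σ₀)) of unit norm, with the + sign (respectively − sign). Then n = (1/√3, 1/√3, 1/√3), v₁ = (u₋ − u₊)/√2 and v₂ = (u₋ + u₊)/√2 form a pure shear basis: {n, v₁, v₂} is an orthonormal basis of ℝ³ and σ_nn = σ_{v₁v₁} = σ_{v₂v₂} = 0. -/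

import Mathlib

noncomputable section

def dot3 (x y : ℝ × ℝ × ℝ) : ℝ := x.1 * y.1 + x.2.1 * y.2.1 + x.2.2 * y.2.2

def smul3 (t : ℝ) (x : ℝ × ℝ × ℝ) : ℝ × ℝ × ℝ := (t * x.1, t * x.2.1, t * x.2.2)
def add3 (x y : ℝ × ℝ × ℝ) : ℝ × ℝ × ℝ := (x.1 + y.1, x.2.1 + y.2.1, x.2.2 + y.2.2)
def sub3 (x y : ℝ × ℝ × ℝ) : ℝ × ℝ × ℝ := (x.1 - y.1, x.2.1 - y.2.1, x.2.2 - y.2.2)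

/-- σ₀ = √(−(σ₁σ₂ + σ₂σ₃ + σ₃σ₁)/3). -/
def sigma0 (σ₁ σ₂ σ₃ : ℝ) : ℝ := Real.sqrt (-(σ₁*σ₂ + σ₂*σ₃ + σ₃*σ₁) / 3)

/-- The positive unit multiple of (1/(σ₁+e), 1/(σ₂+e), 1/(σ₃+e)). -/
def usig (σ₁ σ₂ σ₃ e : ℝ) : ℝ × ℝ × ℝ :=
  smul3 (1 / Real.sqrt (1/(σ₁+e)^2 + 1/(σ₂+e)^2 + 1/(σ₃+e)^2))
    (1/(σ₁+e), 1/(σ₂+e), 1/(σ₃+e))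

/-- u₊ (with the + sign). -/
def usigplus (σ₁ σ₂ σ₃ : ℝ) : ℝ × ℝ × ℝ := usig σ₁ σ₂ σ₃ (sigma0 σ₁ σ₂ σ₃)

/-- u₋ (with the − sign). -/
def usigminus (σ₁ σ₂ σ₃ : ℝ) : ℝ × ℝ × ℝ := usig σ₁ σ₂ σ₃ (-(sigma0 σ₁ σ₂ σ₃))

/-- The cube diagonal direction n = (1,1,1)/√3. -/
def ndiag : ℝ × ℝ × ℝ := (1 / Real.sqrt 3, 1 / Real.sqrt 3, 1 / Real.sqrt 3)

/-- v₁ = (u₋ − u₊)/√2. -/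
def w1 (σ₁ σ₂ σ₃ : ℝ) : ℝ × ℝ × ℝ :=
  smul3 (1 / Real.sqrt 2) (sub3 (usigminus σ₁ σ₂ σ₃) (usigplus σ₁ σ₂ σ₃))

/-- v₂ = (u₋ + u₊)/√2. -/
def w2 (σ₁ σ₂ σ₃ : ℝ) : ℝ × ℝ × ℝ :=
  smul3 (1 / Real.sqrt 2) (add3 (usigminus σ₁ σ₂ σ₃) (usigplus σ₁ σ₂ σ₃))

/-- σ_xx = σ₁x₁² + σ₂x₂² + σ₃x₃². -/
def sigQ (σ₁ σ₂ σ₃ : ℝ) (x : ℝ × ℝ × ℝ) : ℝ := σ₁ * x.1^2 + σ₂ * x.2.1^2 + σ₃ * x.2.2^2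

theorem usig_facts (σ₁ σ₂ σ₃ e : ℝ) (h1 : σ₁+e ≠ 0) (h2 : σ₂+e ≠ 0) (h3 : σ₃+e ≠ 0)
    (hsum : σ₁+σ₂+σ₃ = 0)
    (he : 3*e^2 + (σ₁*σ₂+σ₂*σ₃+σ₃*σ₁) = 0) :
    (usig σ₁ σ₂ σ₃ e).1^2 + (usig σ₁ σ₂ σ₃ e).2.1^2 + (usig σ₁ σ₂ σ₃ e).2.2^2 = 1 ∧
    (usig σ₁ σ₂ σ₃ e).1 + (usig σ₁ σ₂ σ₃ e).2.1 + (usig σ₁ σ₂ σ₃ e).2.2 = 0 ∧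
    σ₁*(usig σ₁ σ₂ σ₃ e).1^2 + σ₂*(usig σ₁ σ₂ σ₃ e).2.1^2 + σ₃*(usig σ₁ σ₂ σ₃ e).2.2^2 = -e := by
  have hN : (0:ℝ) < 1/(σ₁+e)^2 + 1/(σ₂+e)^2 + 1/(σ₃+e)^2 := by positivity
  set N : ℝ := 1/(σ₁+e)^2 + 1/(σ₂+e)^2 + 1/(σ₃+e)^2 with hNdef
  have hNne : N ≠ 0 := ne_of_gt hN
  have hr2 : Real.sqrt N ^ 2 = N := Real.sq_sqrt hN.le
  have hrne : Real.sqrt N ≠ 0 := by positivity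
  have hA : (σ₂+e)*(σ₃+e)+(σ₁+e)*(σ₃+e)+(σ₁+e)*(σ₂+e) = 0 := by
    linear_combination 2*e*hsum + he
  have I1 : 1/(σ₁+e) + 1/(σ₂+e) + 1/(σ₃+e) = 0 := by
    field_simp
    linear_combination hA
  have key : ∀ x : ℝ, (1/Real.sqrt N * x)^2 = x^2 / N := by
    intro x; rw [mul_pow, div_pow, one_pow, hr2]; ring
  have c1 : σ₁/(σ₁+e)^2 = 1/(σ₁+e) - e/(σ₁+e)^2 := by field_simp; ring
  have c2 : σ₂/(σ₂+e)^2 = 1/(σ₂+e) - e/(σ₂+e)^2 := by field_simp; ring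
  have c3 : σ₃/(σ₃+e)^2 = 1/(σ₃+e) - e/(σ₃+e)^2 := by field_simp; ring
  have I2 : σ₁/(σ₁+e)^2 + σ₂/(σ₂+e)^2 + σ₃/(σ₃+e)^2 = -e * N := by
    rw [c1, c2, c3, hNdef]; linear_combination I1
  refine ⟨?_, ?_, ?_⟩
  · simp only [usig, smul3]
    rw [key, key, key, ← add_div, ← add_div]
    rw [show (1/(σ₁+e))^2 + (1/(σ₂+e))^2 + (1/(σ₃+e))^2 = N by rw [hNdef]; field_simp]
    exact div_self hNne
  · simp only [usig, smul3]
    linear_combination (1/Real.sqrt N) * I1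
  · simp only [usig, smul3]
    rw [key, key, key]
    rw [show σ₁ * ((1/(σ₁+e))^2/N) + σ₂*((1/(σ₂+e))^2/N) + σ₃*((1/(σ₃+e))^2/N)
        = (σ₁/(σ₁+e)^2 + σ₂/(σ₂+e)^2 + σ₃/(σ₃+e)^2)/N by field_simp]
    rw [I2]
    field_simp

theorem usig_cross (σ₁ σ₂ σ₃ s : ℝ)
    (h1p : σ₁+s ≠ 0) (h2p : σ₂+s ≠ 0) (h3p : σ₃+s ≠ 0)
    (h1m : σ₁-s ≠ 0) (h2m : σ₂-s ≠ 0) (h3m : σ₃-s ≠ 0)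
    (hsum : σ₁+σ₂+σ₃ = 0)
    (he : 3*s^2 + (σ₁*σ₂+σ₂*σ₃+σ₃*σ₁) = 0) :
    (usig σ₁ σ₂ σ₃ (-s)).1 * (usig σ₁ σ₂ σ₃ s).1
      + (usig σ₁ σ₂ σ₃ (-s)).2.1 * (usig σ₁ σ₂ σ₃ s).2.1
      + (usig σ₁ σ₂ σ₃ (-s)).2.2 * (usig σ₁ σ₂ σ₃ s).2.2 = 0 ∧
    σ₁ * ((usig σ₁ σ₂ σ₃ (-s)).1 * (usig σ₁ σ₂ σ₃ s).1)
      + σ₂ * ((usig σ₁ σ₂ σ₃ (-s)).2.1 * (usig σ₁ σ₂ σ₃ s).2.1)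
      + σ₃ * ((usig σ₁ σ₂ σ₃ (-s)).2.2 * (usig σ₁ σ₂ σ₃ s).2.2) = 0 := by
  have h1m' : σ₁ + -s ≠ 0 := by simpa [sub_eq_add_neg] using h1m
  have h2m' : σ₂ + -s ≠ 0 := by simpa [sub_eq_add_neg] using h2m
  have h3m' : σ₃ + -s ≠ 0 := by simpa [sub_eq_add_neg] using h3m
  have hC : (σ₂+s)*(σ₂+ -s)*((σ₃+s)*(σ₃+ -s)) + (σ₁+s)*(σ₁+ -s)*((σ₃+s)*(σ₃+ -s))
      + (σ₁+s)*(σ₁+ -s)*((σ₂+s)*(σ₂+ -s)) = 0 := by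
    linear_combination (σ₁*σ₂+σ₂*σ₃+σ₃*σ₁ + s^2) * he
      - (2*σ₁*σ₂*σ₃ + 2*s^2*(σ₁+σ₂+σ₃)) * hsum
  have hD : σ₁*((σ₂+s)*(σ₂+ -s)*((σ₃+s)*(σ₃+ -s))) + σ₂*((σ₁+s)*(σ₁+ -s)*((σ₃+s)*(σ₃+ -s)))
      + σ₃*((σ₁+s)*(σ₁+ -s)*((σ₂+s)*(σ₂+ -s))) = 0 := by
    linear_combination (σ₁*σ₂*σ₃) * he + (s^2*(s^2-(σ₁*σ₂+σ₂*σ₃+σ₃*σ₁))) * hsum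
  have J1 : (1/(σ₁+ -s))*(1/(σ₁+s)) + (1/(σ₂+ -s))*(1/(σ₂+s)) + (1/(σ₃+ -s))*(1/(σ₃+s)) = 0 := by
    field_simp
    linear_combination hC
  have J2 : σ₁*((1/(σ₁+ -s))*(1/(σ₁+s))) + σ₂*((1/(σ₂+ -s))*(1/(σ₂+s)))
      + σ₃*((1/(σ₃+ -s))*(1/(σ₃+s))) = 0 := by
    field_simp
    linear_combination hD
  simp only [usig, smul3]
  set rm := Real.sqrt (1/(σ₁+ -s)^2 + 1/(σ₂+ -s)^2 + 1/(σ₃+ -s)^2)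
  set rp := Real.sqrt (1/(σ₁+s)^2 + 1/(σ₂+s)^2 + 1/(σ₃+s)^2)
  constructor
  · linear_combination (1/rm) * (1/rp) * J1
  · linear_combination (1/rm) * (1/rp) * J2

/-- for a nonzero pure shear state, the 111 direction together with
v₁ = (u₋−u₊)/√2 and v₂ = (u₋+u₊)/√2 forms a pure shear basis (and the radicand of σ₀
is positive). -/
theorem stmt16 (σ₁ σ₂ σ₃ : ℝ)
    (hne : ¬(σ₁ = 0 ∧ σ₂ = 0 ∧ σ₃ = 0))
    (hshear : σ₁ + σ₂ + σ₃ = 0)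
    (h1p : σ₁ + sigma0 σ₁ σ₂ σ₃ ≠ 0) (h2p : σ₂ + sigma0 σ₁ σ₂ σ₃ ≠ 0)
    (h3p : σ₃ + sigma0 σ₁ σ₂ σ₃ ≠ 0)
    (h1m : σ₁ - sigma0 σ₁ σ₂ σ₃ ≠ 0) (h2m : σ₂ - sigma0 σ₁ σ₂ σ₃ ≠ 0)
    (h3m : σ₃ - sigma0 σ₁ σ₂ σ₃ ≠ 0) :
    -- the radicand of σ₀ is positive
    0 < -(σ₁*σ₂ + σ₂*σ₃ + σ₃*σ₁) / 3 ∧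
    -- {n, v₁, v₂} is an orthonormal basis of ℝ³ ...
    (dot3 ndiag ndiag = 1 ∧
     dot3 (w1 σ₁ σ₂ σ₃) (w1 σ₁ σ₂ σ₃) = 1 ∧
     dot3 (w2 σ₁ σ₂ σ₃) (w2 σ₁ σ₂ σ₃) = 1 ∧
     dot3 ndiag (w1 σ₁ σ₂ σ₃) = 0 ∧
     dot3 ndiag (w2 σ₁ σ₂ σ₃) = 0 ∧
     dot3 (w1 σ₁ σ₂ σ₃) (w2 σ₁ σ₂ σ₃) = 0) ∧
    -- ... and a pure shear basis: σ_nn = σ_{v₁v₁} = σ_{v₂v₂} = 0.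
    (sigQ σ₁ σ₂ σ₃ ndiag = 0 ∧
     sigQ σ₁ σ₂ σ₃ (w1 σ₁ σ₂ σ₃) = 0 ∧
     sigQ σ₁ σ₂ σ₃ (w2 σ₁ σ₂ σ₃) = 0) := by
  -- positivity of the radicand
  have hsq : σ₁^2+σ₂^2+σ₃^2 = -2*(σ₁*σ₂+σ₂*σ₃+σ₃*σ₁) := by
    linear_combination (σ₁+σ₂+σ₃)*hshear
  have hpos : 0 < σ₁^2+σ₂^2+σ₃^2 := by
    by_contra h
    push_neg at h
    have e1 : σ₁^2 = 0 := le_antisymm (by nlinarith [sq_nonneg σ₂, sq_nonneg σ₃]) (sq_nonneg σ₁)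
    have e2 : σ₂^2 = 0 := le_antisymm (by nlinarith [sq_nonneg σ₁, sq_nonneg σ₃]) (sq_nonneg σ₂)
    have e3 : σ₃^2 = 0 := le_antisymm (by nlinarith [sq_nonneg σ₁, sq_nonneg σ₂]) (sq_nonneg σ₃)
    exact hne ⟨pow_eq_zero_iff two_ne_zero |>.mp e1,
      pow_eq_zero_iff two_ne_zero |>.mp e2, pow_eq_zero_iff two_ne_zero |>.mp e3⟩
  have hrad : 0 < -(σ₁*σ₂ + σ₂*σ₃ + σ₃*σ₁) / 3 := by linarith
  set s := sigma0 σ₁ σ₂ σ₃ with hsdef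
  have hs2 : s^2 = -(σ₁*σ₂ + σ₂*σ₃ + σ₃*σ₁) / 3 := by
    rw [hsdef, sigma0]; exact Real.sq_sqrt hrad.le
  have he : 3*s^2 + (σ₁*σ₂+σ₂*σ₃+σ₃*σ₁) = 0 := by linear_combination 3*hs2
  have hem : 3*(-s)^2 + (σ₁*σ₂+σ₂*σ₃+σ₃*σ₁) = 0 := by linear_combination he
  have h1m' : σ₁ + -s ≠ 0 := by simpa [sub_eq_add_neg] using h1m
  have h2m' : σ₂ + -s ≠ 0 := by simpa [sub_eq_add_neg] using h2m
  have h3m' : σ₃ + -s ≠ 0 := by simpa [sub_eq_add_neg] using h3m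
  obtain ⟨hb1, hb2, hb3⟩ := usig_facts σ₁ σ₂ σ₃ s h1p h2p h3p hshear he
  obtain ⟨ha1, ha2, ha3⟩ := usig_facts σ₁ σ₂ σ₃ (-s) h1m' h2m' h3m' hshear hem
  obtain ⟨hc1, hc2⟩ := usig_cross σ₁ σ₂ σ₃ s h1p h2p h3p h1m h2m h3m hshear he
  have hk : ((1:ℝ)/Real.sqrt 3)^2 = 1/3 := by
    rw [div_pow, one_pow, Real.sq_sqrt (by norm_num : (3:ℝ) ≥ 0)]
  have hc : ((1:ℝ)/Real.sqrt 2)^2 = 1/2 := by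
    rw [div_pow, one_pow, Real.sq_sqrt (by norm_num : (2:ℝ) ≥ 0)]
  have hup : usigplus σ₁ σ₂ σ₃ = usig σ₁ σ₂ σ₃ s := by rw [usigplus, hsdef]
  have hum : usigminus σ₁ σ₂ σ₃ = usig σ₁ σ₂ σ₃ (-s) := by rw [usigminus, hsdef]
  refine ⟨hrad, ⟨?_, ?_, ?_, ?_, ?_, ?_⟩, ?_, ?_, ?_⟩
  · simp only [dot3, ndiag]
    linear_combination 3*hk
  · simp only [w1, dot3, smul3, sub3, hup, hum]
    linear_combination ((1:ℝ)/Real.sqrt 2)^2*ha1 + ((1:ℝ)/Real.sqrt 2)^2*hb1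
      - 2*((1:ℝ)/Real.sqrt 2)^2*hc1 + 2*hc
  · simp only [w2, dot3, smul3, add3, hup, hum]
    linear_combination ((1:ℝ)/Real.sqrt 2)^2*ha1 + ((1:ℝ)/Real.sqrt 2)^2*hb1
      + 2*((1:ℝ)/Real.sqrt 2)^2*hc1 + 2*hc
  · simp only [w1, dot3, smul3, sub3, ndiag, hup, hum]
    linear_combination ((1:ℝ)/Real.sqrt 3)*((1:ℝ)/Real.sqrt 2)*(ha2 - hb2)
  · simp only [w2, dot3, smul3, add3, ndiag, hup, hum]
    linear_combination ((1:ℝ)/Real.sqrt 3)*((1:ℝ)/Real.sqrt 2)*(ha2 + hb2)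
  · simp only [w1, w2, dot3, smul3, sub3, add3, hup, hum]
    linear_combination ((1:ℝ)/Real.sqrt 2)^2*ha1 - ((1:ℝ)/Real.sqrt 2)^2*hb1
  · simp only [sigQ, ndiag]
    linear_combination ((1:ℝ)/Real.sqrt 3)^2*hshear
  · simp only [w1, sigQ, smul3, sub3, hup, hum]
    linear_combination ((1:ℝ)/Real.sqrt 2)^2*ha3 + ((1:ℝ)/Real.sqrt 2)^2*hb3
      - 2*((1:ℝ)/Real.sqrt 2)^2*hc2
  · simp only [w2, sigQ, smul3, add3, hup, hum]
    linear_combination ((1:ℝ)/Real.sqrt 2)^2*ha3 + ((1:ℝ)/Real.sqrt 2)^2*hb3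
      + 2*((1:ℝ)/Real.sqrt 2)^2*hc2
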